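/- Let S ⊆ ℝ^D be a nonempty compact simple star-shaped set (a finite union of axis-parallel cuboids C_1,...,C_m with nonempty intersection P), let μ_0 ∈ (0,1], c > 0, and let d_C be the combined metric (weighted Manhattan over domains of weighted Euclidean within domains, positive weights). Define μ(x) = μ_0 · max_{y∈S} e^{−c·d_C(x,y)}. Then for every α ∈ (0, μ_0], the α-cut {x ∈ ℝ^D : μ(x) ≥ α} is star-shaped under d_C with respect to P, and for α > μ_0 the α-cut is empty. -/

import Mathlib

open Finset
open scoped Classical

/-- The combined distance: weighted Manhattan sum over domains of weighted
Euclidean distances within each domain. -/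
noncomputable def combinedDist {ι κ : Type*} [Fintype ι] [DecidableEq κ]
    (doms : Finset κ) (dom : ι → κ) (wδ : κ → ℝ) (wd : ι → ℝ)
    (x y : ι → ℝ) : ℝ :=
  ∑ δ ∈ doms, wδ δ *
    Real.sqrt (∑ d ∈ Finset.univ.filter (fun d => dom d = δ), wd d * |x d - y d| ^ 2)

/-- Auxiliary embedding of a block of coordinates into Euclidean space,
rescaled by square roots of the weights. -/
noncomputable def embBlock {ι : Type*} [Fintype ι] (wd : ι → ℝ) (t : Finset ι)
    (v : ι → ℝ) : EuclideanSpace ℝ ι :=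
  WithLp.toLp 2 (fun d => if d ∈ t then Real.sqrt (wd d) * v d else 0)

lemma norm_embBlock {ι : Type*} [Fintype ι] {wd : ι → ℝ} (hwd : ∀ d, 0 ≤ wd d)
    (t : Finset ι) (v : ι → ℝ) :
    ‖embBlock wd t v‖ = Real.sqrt (∑ d ∈ t, wd d * |v d| ^ 2) := by
  rw [EuclideanSpace.norm_eq]
  congr 1
  rw [← Finset.sum_subset (Finset.subset_univ t)
    (fun d _ hd => by simp [embBlock, PiLp.toLp_apply, hd])]
  refine Finset.sum_congr rfl fun d hd => ?_
  simp only [embBlock, PiLp.toLp_apply, if_pos hd, Real.norm_eq_abs, abs_mul, mul_pow, sq_abs]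
  rw [Real.sq_sqrt (hwd d)]

lemma embBlock_add {ι : Type*} [Fintype ι] (wd : ι → ℝ) (t : Finset ι)
    (v u : ι → ℝ) :
    embBlock wd t (fun d => v d + u d) = embBlock wd t v + embBlock wd t u := by
  ext d
  simp only [embBlock, PiLp.add_apply, PiLp.toLp_apply]
  split_ifs <;> ring

lemma embBlock_smul {ι : Type*} [Fintype ι] (wd : ι → ℝ) (t : Finset ι)
    (r : ℝ) (v : ι → ℝ) :
    embBlock wd t (fun d => r * v d) = r • embBlock wd t v := by
  ext d
  simp only [embBlock, PiLp.smul_apply, smul_eq_mul, PiLp.toLp_apply]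
  split_ifs <;> ring


lemma embBlock_congr {ι : Type*} [Fintype ι] (wd : ι → ℝ) (t : Finset ι)
    {v u : ι → ℝ} (h : ∀ d ∈ t, v d = u d) :
    embBlock wd t v = embBlock wd t u := by
  ext d
  simp only [embBlock, PiLp.toLp_apply]
  split_ifs with hd
  · rw [h d hd]
  · rfl

/-- Proposition 1: for a fuzzy simple star-shaped set with core
`S = ⋃ᵢ Cᵢ` (a finite union of nonempty axis-parallel cuboids with nonempty
intersection `P`) and membership `μ(x) = μ₀ · max_{y∈S} e^{−c·d_C(x,y)}`,
every `α`-cut with `α ∈ (0, μ₀]` is star-shaped under `d_C` with respect to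
`P`, and for `α > μ₀` the `α`-cut is empty. -/
theorem fuzzy_simple_star_shaped_alpha_cuts {ι κ : Type*} [Fintype ι] [Fintype κ]
    [DecidableEq κ] (dom : ι → κ) (wδ : κ → ℝ) (wd : ι → ℝ)
    (hwδ : ∀ δ, 0 < wδ δ) (hwd : ∀ d, 0 < wd d)
    {m : ℕ} (hm : 0 < m) (lo hi : Fin m → ι → ℝ) (hlohi : ∀ i d, lo i d ≤ hi i d)
    (C : Fin m → Set (ι → ℝ))
    (hC : ∀ i, C i = {x : ι → ℝ | ∀ d, lo i d ≤ x d ∧ x d ≤ hi i d})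
    (hP : (⋂ i, C i).Nonempty)
    (S : Set (ι → ℝ)) (hS : S = ⋃ i, C i)
    (μ0 c : ℝ) (hμ0 : μ0 ∈ Set.Ioc (0 : ℝ) 1) (hc : 0 < c)
    (μ : (ι → ℝ) → ℝ)
    (hμ : ∀ x, μ x = μ0 * ⨆ y : S, Real.exp (-c * combinedDist Finset.univ dom wδ wd x y)) :
    (∀ α ∈ Set.Ioc (0 : ℝ) μ0,
      ∀ p ∈ ⋂ i, C i, ∀ z ∈ {x : ι → ℝ | α ≤ μ x}, ∀ y : ι → ℝ,
        combinedDist Finset.univ dom wδ wd p y + combinedDist Finset.univ dom wδ wd y z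
            = combinedDist Finset.univ dom wδ wd p z →
          y ∈ {x : ι → ℝ | α ≤ μ x}) ∧
    (∀ α : ℝ, μ0 < α → {x : ι → ℝ | α ≤ μ x} = ∅) := by
  haveI : NeZero m := ⟨hm.ne'⟩
  set D := combinedDist Finset.univ dom wδ wd with hD
  set blk : κ → Finset ι := fun δ => Finset.univ.filter (fun d => dom d = δ) with hblk
  have hwd' : ∀ d, 0 ≤ wd d := fun d => (hwd d).le
  -- rewrite combinedDist via norms
  have hDnorm : ∀ x y : ι → ℝ,
      D x y = ∑ δ : κ, wδ δ * ‖embBlock wd (blk δ) (fun d => x d - y d)‖ := by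
    intro x y
    simp only [hD, combinedDist, norm_embBlock hwd', hblk]
  have hDnonneg : ∀ x y : ι → ℝ, 0 ≤ D x y := by
    intro x y
    rw [hDnorm]
    exact Finset.sum_nonneg fun δ _ => mul_nonneg (hwδ δ).le (norm_nonneg _)
  -- S is nonempty
  obtain ⟨p0, hp0⟩ := hP
  have hSne : S.Nonempty := ⟨p0, by
    rw [hS]; exact Set.mem_iUnion.2 ⟨⟨0, hm⟩, Set.mem_iInter.1 hp0 _⟩⟩
  haveI : Nonempty S := hSne.to_subtype
  have hbdd : ∀ x : ι → ℝ,
      BddAbove (Set.range fun y : S => Real.exp (-c * D x y)) := by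
    intro x
    refine ⟨1, Set.forall_mem_range.2 fun y => ?_⟩
    rw [Real.exp_le_one_iff]
    exact mul_nonpos_of_nonpos_of_nonneg (neg_nonpos.2 hc.le) (hDnonneg x y)
  have hμle : ∀ x, μ x ≤ μ0 := by
    intro x
    rw [hμ x]
    have : (⨆ y : S, Real.exp (-c * D x y)) ≤ 1 := by
      refine ciSup_le fun y => ?_
      rw [Real.exp_le_one_iff]
      exact mul_nonpos_of_nonpos_of_nonneg (neg_nonpos.2 hc.le) (hDnonneg x y)
    calc μ0 * _ ≤ μ0 * 1 := by
          exact mul_le_mul_of_nonneg_left this hμ0.1.le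
      _ = μ0 := mul_one μ0
  constructor
  · rintro α ⟨hα0, hαμ0⟩ p hp z hz y hy
    -- key: μ z ≤ μ y
    simp only [Set.mem_setOf_eq] at hz ⊢
    refine le_trans hz ?_
    rw [hμ z, hμ y]
    refine mul_le_mul_of_nonneg_left ?_ hμ0.1.le
    refine ciSup_le fun s => ?_
    -- per-block equality in the triangle inequality
    have htri : ∀ δ : κ, ‖embBlock wd (blk δ) (fun d => p d - y d)‖
        + ‖embBlock wd (blk δ) (fun d => y d - z d)‖
        = ‖embBlock wd (blk δ) (fun d => p d - z d)‖ := by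
      have hsplit : ∀ δ : κ, embBlock wd (blk δ) (fun d => p d - z d)
          = embBlock wd (blk δ) (fun d => p d - y d)
            + embBlock wd (blk δ) (fun d => y d - z d) := by
        intro δ
        have harg : (fun d => p d - z d) = fun d => (p d - y d) + (y d - z d) := by
          funext d; ring
        rw [harg, embBlock_add]
      have hle : ∀ δ ∈ (Finset.univ : Finset κ),
          wδ δ * ‖embBlock wd (blk δ) (fun d => p d - z d)‖
          ≤ wδ δ * (‖embBlock wd (blk δ) (fun d => p d - y d)‖
            + ‖embBlock wd (blk δ) (fun d => y d - z d)‖) := by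
        intro δ _
        refine mul_le_mul_of_nonneg_left ?_ (hwδ δ).le
        rw [hsplit δ]
        exact norm_add_le _ _
      have hsum : ∑ δ : κ, wδ δ * ‖embBlock wd (blk δ) (fun d => p d - z d)‖
          = ∑ δ : κ, wδ δ * (‖embBlock wd (blk δ) (fun d => p d - y d)‖
            + ‖embBlock wd (blk δ) (fun d => y d - z d)‖) := by
        simp only [mul_add, Finset.sum_add_distrib]
        rw [← hDnorm, ← hDnorm, ← hDnorm, ← hy]
      intro δ
      have h1 := ((Finset.sum_eq_sum_iff_of_le hle).1 hsum) δ (Finset.mem_univ δ)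
      have h2 := mul_left_cancel₀ (hwδ δ).ne' h1
      linarith [h2]
    have hsplit : ∀ δ : κ, embBlock wd (blk δ) (fun d => p d - z d)
        = embBlock wd (blk δ) (fun d => p d - y d)
          + embBlock wd (blk δ) (fun d => y d - z d) := by
      intro δ
      have harg : (fun d => p d - z d) = fun d => (p d - y d) + (y d - z d) := by
        funext d; ring
      rw [harg, embBlock_add]
    -- extract the per-block interpolation parameter
    have hT : ∀ δ : κ, ∃ t : ℝ, 0 ≤ t ∧ t ≤ 1 ∧
        ∀ d, dom d = δ → y d - p d = t * (z d - p d) := by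
      intro δ
      have hray : SameRay ℝ (embBlock wd (blk δ) (fun d => p d - y d))
          (embBlock wd (blk δ) (fun d => y d - z d)) := by
        refine sameRay_iff_norm_add.2 ?_
        rw [← hsplit δ]
        exact (htri δ).symm
      obtain ⟨a, b, ha, hb, hab, hA, _⟩ := hray.exists_eq_smul_add
      refine ⟨a, ha, by linarith, fun d hd => ?_⟩
      have hdblk : d ∈ blk δ := by
        simp only [hblk, Finset.mem_filter, Finset.mem_univ, true_and, hd]
      have hcoord := congrArg (fun v : EuclideanSpace ℝ ι => v d) hA
      rw [← hsplit δ] at hcoord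
      have hsmul : (a • embBlock wd (blk δ) (fun d => p d - z d)) d
          = a * (Real.sqrt (wd d) * (p d - z d)) := by
        simp only [PiLp.smul_apply, smul_eq_mul, embBlock, PiLp.toLp_apply, if_pos hdblk]
      rw [hsmul] at hcoord
      simp only [embBlock, PiLp.toLp_apply, if_pos hdblk] at hcoord
      have hsq : Real.sqrt (wd d) ≠ 0 := ne_of_gt (Real.sqrt_pos.2 (hwd d))
      have h7 : Real.sqrt (wd d) * (p d - y d)
          = Real.sqrt (wd d) * (a * (p d - z d)) := by
        linear_combination hcoord
      have h6 := mul_left_cancel₀ hsq h7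
      linear_combination -h6
    choose t ht0 ht1 hty using hT
    -- the witness cuboid containing s
    have hsS : (↑s : ι → ℝ) ∈ ⋃ i, C i := by rw [← hS]; exact s.2
    obtain ⟨i, hsi⟩ := Set.mem_iUnion.1 hsS
    have hpi : p ∈ C i := Set.mem_iInter.1 hp i
    rw [hC i] at hsi hpi
    -- the shrunken point
    set s' : ι → ℝ := fun d => p d + t (dom d) * ((s : ι → ℝ) d - p d) with hs'
    have hs'S : s' ∈ S := by
      rw [hS]
      refine Set.mem_iUnion.2 ⟨i, ?_⟩
      rw [hC i]
      intro d
      have h1 := hsi d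
      have h2 := hpi d
      have h3 := ht0 (dom d)
      have h4 := ht1 (dom d)
      constructor <;>
      · simp only [hs']
        nlinarith [h1.1, h1.2, h2.1, h2.2, h3, h4,
          mul_nonneg h3 (sub_nonneg.2 h1.1), mul_nonneg h3 (sub_nonneg.2 h1.2),
          mul_nonneg (by linarith : (0:ℝ) ≤ 1 - t (dom d)) (sub_nonneg.2 h2.1),
          mul_nonneg (by linarith : (0:ℝ) ≤ 1 - t (dom d)) (sub_nonneg.2 h2.2),
          mul_nonneg h3 (sub_nonneg.2 (h1.2.trans' h1.1))]
    have hdist : D y s' ≤ D z (s : ι → ℝ) := by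
      rw [hDnorm, hDnorm]
      refine Finset.sum_le_sum fun δ _ => ?_
      refine mul_le_mul_of_nonneg_left ?_ (hwδ δ).le
      have heq : embBlock wd (blk δ) (fun d => y d - s' d)
          = embBlock wd (blk δ) (fun d => t δ * (z d - (s : ι → ℝ) d)) := by
        refine embBlock_congr wd (blk δ) fun d hd => ?_
        have hdδ : dom d = δ := by
          simp only [hblk, Finset.mem_filter] at hd
          exact hd.2
        have h5 := hty (dom d) d rfl
        simp only [hs', hdδ] at h5 ⊢
        linear_combination h5
      rw [heq, embBlock_smul, norm_smul, Real.norm_eq_abs,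
        abs_of_nonneg (ht0 δ)]
      calc t δ * ‖embBlock wd (blk δ) (fun d => z d - (s : ι → ℝ) d)‖
          ≤ 1 * ‖embBlock wd (blk δ) (fun d => z d - (s : ι → ℝ) d)‖ :=
            mul_le_mul_of_nonneg_right (ht1 δ) (norm_nonneg _)
        _ = _ := one_mul _
    calc Real.exp (-c * D z (s : ι → ℝ)) ≤ Real.exp (-c * D y s') := by
          refine Real.exp_le_exp.2 ?_
          nlinarith [hdist, hc]
      _ ≤ ⨆ y' : S, Real.exp (-c * D y y') :=
          le_ciSup (hbdd y) (⟨s', hs'S⟩ : S)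
  · intro α hα
    ext x
    simp only [Set.mem_setOf_eq, Set.mem_empty_iff_false, iff_false, not_le]
    exact lt_of_le_of_lt (hμle x) hα
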